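/- Let Λ ≥ 1 and C_b ≥ 0, and consider the one-dimensional Gaussian density g(m, a; y', y) = (2πa)^{-1/2} exp(-(y - y' - m)²/(2a)). Then there exist constants C > 0 and c > 0, depending only on Λ and C_b, such that for every τ ∈ (0,1], every a ∈ [Λ^{-1}τ, Λτ], every m ∈ ℝ with |m| ≤ C_b τ, and all y', y ∈ ℝ, the mixed partial derivatives satisfy: |∂_m ∂_{y'} g| ≤ C τ^{-1} · c τ^{-1/2} exp(-c(y-y')²/τ), |∂_a ∂_{y'} g| ≤ C τ^{-3/2} · c τ^{-1/2} exp(-c(y-y')²/τ), |∂_m ∂²_{y'} g| ≤ C τ^{-3/2} · c τ^{-1/2} exp(-c(y-y')²/τ), and |∂_a ∂²_{y'} g| ≤ C τ^{-2} · c τ^{-1/2} exp(-c(y-y')²/τ). -/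

import Mathlib

/-- The one-dimensional Gaussian density `g(m, a; y', y) = (2πa)^{-1/2} exp(-(y-y'-m)²/(2a))`. -/
noncomputable def gauss (m a y' y : ℝ) : ℝ :=
  (2 * Real.pi * a) ^ (-(1:ℝ) / 2) * Real.exp (-(y - y' - m) ^ 2 / (2 * a))

lemma hA (a c d x : ℝ) (ha : a ≠ 0) :
    HasDerivAt (fun s : ℝ => Real.exp (-(c - s - d)^2/(2*a)))
      (Real.exp (-(c - x - d)^2/(2*a)) * ((c - x - d)/a)) x := by
  have h0 : HasDerivAt (fun s : ℝ => c - s - d) (-1) x :=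
    ((hasDerivAt_id x).const_sub c).sub_const d
  have h1 : HasDerivAt (fun s : ℝ => -(c - s - d)^2/(2*a)) ((c - x - d)/a) x := by
    have h2 := ((h0.pow 2).neg).div_const (2*a)
    refine h2.congr_deriv ?_
    field_simp; ring
  exact h1.exp

lemma hB (a c d x : ℝ) (ha : a ≠ 0) :
    HasDerivAt (fun s : ℝ => Real.exp (-(c - d - s)^2/(2*a)))
      (Real.exp (-(c - d - x)^2/(2*a)) * ((c - d - x)/a)) x := by
  have h0 : HasDerivAt (fun s : ℝ => c - d - s) (-1) x :=
    (hasDerivAt_id x).const_sub (c - d)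
  have h1 : HasDerivAt (fun s : ℝ => -(c - d - s)^2/(2*a)) ((c - d - x)/a) x := by
    have h2 := ((h0.pow 2).neg).div_const (2*a)
    refine h2.congr_deriv ?_
    field_simp; ring
  exact h1.exp

lemma L1 (m a y' y : ℝ) (ha : a ≠ 0) :
    HasDerivAt (fun z : ℝ => gauss m a z y)
      (gauss m a y' y * ((y - y' - m)/a)) y' := by
  have h := (hA a y m y' ha).const_mul ((2 * Real.pi * a) ^ (-(1:ℝ) / 2))
  simpa [gauss, mul_assoc] using h

lemma L2 (m a y' y : ℝ) (ha : a ≠ 0) :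
    HasDerivAt (fun mm : ℝ => gauss mm a y' y)
      (gauss m a y' y * ((y - y' - m)/a)) m := by
  have h := (hB a y y' m ha).const_mul ((2 * Real.pi * a) ^ (-(1:ℝ) / 2))
  simpa [gauss, mul_assoc] using h

lemma L3 (m a y' y : ℝ) (ha : 0 < a) :
    HasDerivAt (fun aa : ℝ => gauss m aa y' y)
      (gauss m a y' y * ((y - y' - m)^2/(2*a^2) - 1/(2*a))) a := by
  have h2πa : (0:ℝ) < 2 * Real.pi * a := by positivity
  have hK : HasDerivAt (fun aa : ℝ => (2*Real.pi*aa) ^ (-(1:ℝ)/2))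
      ((-(1:ℝ)/2) * (2*Real.pi*a) ^ (-(1:ℝ)/2 - 1) * (2*Real.pi)) a := by
    have h1 : HasDerivAt (fun aa : ℝ => 2*Real.pi*aa) (2*Real.pi) a := by
      simpa using (hasDerivAt_id a).const_mul (2*Real.pi)
    exact (Real.hasDerivAt_rpow_const (Or.inl h2πa.ne')).comp a h1
  have hE : HasDerivAt (fun aa : ℝ => Real.exp (-(y - y' - m)^2/(2*aa)))
      (Real.exp (-(y - y' - m)^2/(2*a)) * ((y - y' - m)^2/(2*a^2))) a := by
    have h0 : HasDerivAt (fun aa : ℝ => 2*aa) 2 a := by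
      simpa using (hasDerivAt_id a).const_mul (2:ℝ)
    have h2 := (h0.inv (by positivity)).const_mul (-(y - y' - m)^2)
    have h3 : (fun aa : ℝ => -(y - y' - m)^2 * (2*aa)⁻¹)
        = fun aa : ℝ => -(y - y' - m)^2/(2*aa) := by
      funext aa; rw [div_eq_mul_inv]
    have h4 : -(y - y' - m)^2 * (-2/(2*a)^2) = (y - y' - m)^2/(2*a^2) := by
      field_simp
    simp only [Pi.inv_apply] at h2
    rw [h3, h4] at h2
    exact h2.exp
  have h := hK.mul hE
  have hid : (2*Real.pi*a) ^ (-(1:ℝ)/2 - 1)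
      = (2*Real.pi*a) ^ (-(1:ℝ)/2) * (2*Real.pi*a)⁻¹ := by
    rw [← Real.rpow_neg_one (2*Real.pi*a), ← Real.rpow_add h2πa]
    norm_num
  unfold gauss
  refine h.congr_deriv ?_
  rw [hid]
  field_simp
  ring

lemma derivz (m a y' y : ℝ) (ha : a ≠ 0) :
    deriv (fun z : ℝ => gauss m a z y) y' = gauss m a y' y * ((y - y' - m)/a) :=
  (L1 m a y' y ha).deriv

lemma hlin (m a y' y : ℝ) : HasDerivAt (fun z : ℝ => (y - z - m)/a) (-1/a) y' := by
  have := (((hasDerivAt_id y').const_sub y).sub_const m).div_const a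
  simpa using this

lemma derivzz (m a y' y : ℝ) (ha : a ≠ 0) :
    deriv (deriv (fun z : ℝ => gauss m a z y)) y'
      = gauss m a y' y * ((y - y' - m)^2/a^2 - 1/a) := by
  have hfun : deriv (fun z : ℝ => gauss m a z y)
      = fun z : ℝ => gauss m a z y * ((y - z - m)/a) :=
    funext fun z => (L1 m a z y ha).deriv
  rw [hfun]
  have hprod := (L1 m a y' y ha).mul (hlin m a y' y)
  rw [HasDerivAt.deriv (f := fun z => gauss m a z y * ((y - z - m)/a)) hprod]
  field_simp
  ring

lemma deriv1 (m a y' y : ℝ) (ha : a ≠ 0) :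
    deriv (fun mm : ℝ => deriv (fun z : ℝ => gauss mm a z y) y') m
      = gauss m a y' y * ((y - y' - m)^2/a^2 - 1/a) := by
  have hfun : (fun mm : ℝ => deriv (fun z : ℝ => gauss mm a z y) y')
      = fun mm : ℝ => gauss mm a y' y * ((y - y' - mm)/a) :=
    funext fun mm => derivz mm a y' y ha
  rw [hfun]
  have hlin2 : HasDerivAt (fun mm : ℝ => (y - y' - mm)/a) (-1/a) m := by
    have := ((hasDerivAt_id m).const_sub (y - y')).div_const a
    simpa using this
  have hprod := (L2 m a y' y ha).mul hlin2
  rw [HasDerivAt.deriv (f := fun mm => gauss mm a y' y * ((y - y' - mm)/a)) hprod]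
  field_simp
  ring

lemma deriv3 (m a y' y : ℝ) (ha : a ≠ 0) :
    deriv (fun mm : ℝ => deriv (deriv (fun z : ℝ => gauss mm a z y)) y') m
      = gauss m a y' y * ((y - y' - m)^3/a^3 - 3*(y - y' - m)/a^2) := by
  have hfun : (fun mm : ℝ => deriv (deriv (fun z : ℝ => gauss mm a z y)) y')
      = fun mm : ℝ => gauss mm a y' y * ((y - y' - mm)^2/a^2 - 1/a) :=
    funext fun mm => derivzz mm a y' y ha
  rw [hfun]
  have hq : HasDerivAt (fun mm : ℝ => (y - y' - mm)^2/a^2 - 1/a)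
      (-(2*(y - y' - m))/a^2) m := by
    have h0 : HasDerivAt (fun mm : ℝ => y - y' - mm) (-1) m :=
      (hasDerivAt_id m).const_sub (y - y')
    have := (((h0.pow 2).div_const (a^2)).sub_const (1/a))
    refine this.congr_deriv ?_
    field_simp; norm_num; ring
  have hprod := (L2 m a y' y ha).mul hq
  rw [HasDerivAt.deriv (f := fun mm => gauss mm a y' y * ((y - y' - mm)^2/a^2 - 1/a)) hprod]
  field_simp
  ring

lemma deriv2 (m a y' y : ℝ) (ha : 0 < a) :
    deriv (fun aa : ℝ => deriv (fun z : ℝ => gauss m aa z y) y') a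
      = gauss m a y' y * ((y - y' - m)^3/(2*a^3) - 3*(y - y' - m)/(2*a^2)) := by
  have hev : (fun aa : ℝ => deriv (fun z : ℝ => gauss m aa z y) y')
      =ᶠ[nhds a] fun aa : ℝ => gauss m aa y' y * ((y - y' - m) * aa⁻¹) := by
    filter_upwards [eventually_ne_nhds ha.ne'] with aa haa
    rw [derivz m aa y' y haa, div_eq_mul_inv]
  have hprod := (L3 m a y' y ha).mul ((hasDerivAt_inv ha.ne').const_mul (y - y' - m))
  have := (hprod.congr_of_eventuallyEq hev).deriv
  rw [this]
  field_simp
  ring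

lemma deriv4 (m a y' y : ℝ) (ha : 0 < a) :
    deriv (fun aa : ℝ => deriv (deriv (fun z : ℝ => gauss m aa z y)) y') a
      = gauss m a y' y * ((y - y' - m)^4/(2*a^4) - 3*(y - y' - m)^2/a^3 + 3/(2*a^2)) := by
  have hev : (fun aa : ℝ => deriv (deriv (fun z : ℝ => gauss m aa z y)) y')
      =ᶠ[nhds a] fun aa : ℝ => gauss m aa y' y * ((y - y' - m)^2 * (aa^2)⁻¹ - aa⁻¹) := by
    filter_upwards [eventually_ne_nhds ha.ne'] with aa haa
    rw [derivzz m aa y' y haa, div_eq_mul_inv, one_div]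
  have hq : HasDerivAt (fun aa : ℝ => (y - y' - m)^2 * (aa^2)⁻¹ - aa⁻¹)
      ((y - y' - m)^2 * (-(2*a)/(a^2)^2) - (-(a^2)⁻¹)) a := by
    have h1 := ((hasDerivAt_pow 2 a).inv (pow_ne_zero 2 ha.ne')).const_mul ((y - y' - m)^2)
    have h2 := hasDerivAt_inv ha.ne'
    have := h1.sub h2
    refine this.congr_deriv ?_
    norm_num
  have hprod := (L3 m a y' y ha).mul hq
  have := (hprod.congr_of_eventuallyEq hev).deriv
  rw [this]
  field_simp
  ring

lemma gauss_eq (m a y' y : ℝ) (ha : 0 < a) :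
    gauss m a y' y = (Real.sqrt (2*Real.pi*a))⁻¹ * Real.exp (-(y - y' - m)^2/(2*a)) := by
  unfold gauss
  rw [show (-(1:ℝ)/2) = -(1/2) by norm_num, Real.rpow_neg (by positivity), ← Real.sqrt_eq_rpow]

lemma core (a u : ℝ) (ha : 0 < a) (n : ℕ) (hn : n ≤ 4) :
    |u|^n * Real.exp (-u^2/(2*a)) ≤ 64 * (Real.sqrt a)^n * Real.exp (-u^2/(4*a)) := by
  have hwpos : 0 < Real.sqrt a := Real.sqrt_pos.mpr ha
  set w := Real.sqrt a with hw
  have hw2 : w^2 = a := Real.sq_sqrt ha.le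
  set t := |u| / w with ht
  have htn : 0 ≤ t := div_nonneg (abs_nonneg u) hwpos.le
  have hu : |u| = t * w := by rw [ht]; field_simp
  have hu2 : u^2 = t^2 * a := by rw [← sq_abs, hu, ← hw2]; ring
  have hexp : (1 + t^2/8)^2 ≤ Real.exp (t^2/4) := by
    have h1 := Real.add_one_le_exp (t^2/8)
    have h2 : Real.exp (t^2/4) = Real.exp (t^2/8) * Real.exp (t^2/8) := by
      rw [← Real.exp_add]; ring_nf
    nlinarith [Real.exp_pos (t^2/8), sq_nonneg t]
  have hkey : t^n ≤ 64 * Real.exp (t^2/4) := by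
    interval_cases n
    · nlinarith [sq_nonneg t]
    · nlinarith [sq_nonneg (t-8), sq_nonneg t]
    · nlinarith [sq_nonneg t]
    · nlinarith [mul_nonneg (sq_nonneg (t-8)) (sq_nonneg t), sq_nonneg t, sq_nonneg (t-8)]
    · nlinarith [sq_nonneg t]
  have hXa : -u^2/(2*a) = -(t^2)/2 := by rw [hu2]; field_simp
  have hYa : -u^2/(4*a) = -(t^2)/4 := by rw [hu2]; field_simp
  rw [hu, mul_pow, hXa, hYa]
  have h64 : t^n * Real.exp (-(t^2)/2) ≤ 64 * Real.exp (-(t^2)/4) :=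
    calc t^n * Real.exp (-(t^2)/2)
        ≤ (64 * Real.exp (t^2/4)) * Real.exp (-(t^2)/2) :=
          mul_le_mul_of_nonneg_right hkey (Real.exp_pos _).le
      _ = 64 * Real.exp (-(t^2)/4) := by
          rw [mul_assoc, ← Real.exp_add]; congr 1; ring
  calc t^n * w^n * Real.exp (-(t^2)/2) = w^n * (t^n * Real.exp (-(t^2)/2)) := by ring
    _ ≤ w^n * (64 * Real.exp (-(t^2)/4)) :=
        mul_le_mul_of_nonneg_left h64 (pow_nonneg hwpos.le n)
    _ = 64 * w^n * Real.exp (-(t^2)/4) := by ring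


lemma coefA (L s : ℝ) (h1 : 1 ≤ L) (hs : 0 ≤ s) (h3 : s ≤ L) : 128*(s*L) ≤ 512*L^3 := by
  have h4 : s*L ≤ L*L := mul_le_mul_of_nonneg_right h3 (by linarith)
  have h5 : L*L ≤ L*L*L := le_mul_of_one_le_right (by nlinarith) h1
  nlinarith [h4, h5]

lemma coefB (L : ℝ) (h1 : 1 ≤ L) : 128*(L*(L*L)) ≤ 512*L^3 := by
  nlinarith [pow_nonneg (by linarith : (0:ℝ) ≤ L) 3]

lemma coefB' (L : ℝ) (h1 : 1 ≤ L) : 256*(L*(L*L)) ≤ 512*L^3 := by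
  nlinarith [pow_nonneg (by linarith : (0:ℝ) ≤ L) 3]

lemma coefC (L s : ℝ) (h1 : 1 ≤ L) (hs : 0 ≤ s) (h3 : s ≤ L) : 320*(s*(L*L)) ≤ 512*L^3 := by
  have h4 : s*(L*L) ≤ L*(L*L) := mul_le_mul_of_nonneg_right h3 (mul_nonneg (by linarith) (by linarith))
  nlinarith [h4, pow_nonneg (by linarith : (0:ℝ) ≤ L) 3]

set_option maxHeartbeats 1000000 in
/-- Bounds on the mixed derivatives of the one-dimensional Gaussian density with respect
to the parameters `m`, `a` and the space variable `y'`. -/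
theorem gaussian_mixed_derivative_bounds (Λ Cb : ℝ) (hΛ : 1 ≤ Λ) (hCb : 0 ≤ Cb) :
    ∃ C > (0:ℝ), ∃ c > (0:ℝ), ∀ τ : ℝ, τ ∈ Set.Ioc (0:ℝ) 1 →
      ∀ a : ℝ, Λ⁻¹ * τ ≤ a → a ≤ Λ * τ →
      ∀ m : ℝ, |m| ≤ Cb * τ →
      ∀ y' y : ℝ,
        |deriv (fun mm : ℝ => deriv (fun z : ℝ => gauss mm a z y) y') m|
          ≤ C * τ⁻¹ *
            (c * τ ^ (-(1:ℝ) / 2) * Real.exp (-c * (y - y') ^ 2 / τ)) ∧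
        |deriv (fun aa : ℝ => deriv (fun z : ℝ => gauss m aa z y) y') a|
          ≤ C * τ ^ (-(3:ℝ) / 2) *
            (c * τ ^ (-(1:ℝ) / 2) * Real.exp (-c * (y - y') ^ 2 / τ)) ∧
        |deriv (fun mm : ℝ => deriv (deriv (fun z : ℝ => gauss mm a z y)) y') m|
          ≤ C * τ ^ (-(3:ℝ) / 2) *
            (c * τ ^ (-(1:ℝ) / 2) * Real.exp (-c * (y - y') ^ 2 / τ)) ∧
        |deriv (fun aa : ℝ => deriv (deriv (fun z : ℝ => gauss m aa z y)) y') a|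
          ≤ C * τ ^ (-(2:ℝ)) *
            (c * τ ^ (-(1:ℝ) / 2) * Real.exp (-c * (y - y') ^ 2 / τ)) := by
  have hΛ0 : (0:ℝ) < Λ := lt_of_lt_of_le one_pos hΛ
  refine ⟨4096 * Λ^4 * Real.exp (Cb^2), by positivity, (8*Λ)⁻¹, by positivity,
    fun τ hτ a ha1 ha2 m hm y' y => ?_⟩
  obtain ⟨hτ0, hτ1⟩ := hτ
  have ha0 : 0 < a := lt_of_lt_of_le (by positivity) ha1
  have hsτ0 : 0 < Real.sqrt τ := Real.sqrt_pos.mpr hτ0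
  have hsΛ0 : 0 < Real.sqrt Λ := Real.sqrt_pos.mpr hΛ0
  have hsa0 : 0 < Real.sqrt a := Real.sqrt_pos.mpr ha0
  set sτ := Real.sqrt τ with hsτdef
  set sΛ := Real.sqrt Λ with hsΛdef
  set sa := Real.sqrt a with hsadef
  have hsτ2 : sτ^2 = τ := Real.sq_sqrt hτ0.le
  have hsΛ2 : sΛ^2 = Λ := Real.sq_sqrt hΛ0.le
  have hsa2 : sa^2 = a := Real.sq_sqrt ha0.le
  have hss : sτ * sτ = τ := Real.mul_self_sqrt hτ0.le
  have hslmul : sΛ * sΛ = Λ := Real.mul_self_sqrt hΛ0.le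
  have hsΛleΛ : sΛ ≤ Λ := by nlinarith [hsΛ2, hsΛ0.le, hΛ]
  set E := Real.exp (-(8*Λ)⁻¹ * (y - y')^2 / τ) with hEdef
  set S := (Real.sqrt (2*Real.pi*a))⁻¹ with hSdef
  set X := Real.exp (-(y - y' - m)^2/(2*a)) with hXdef
  set Y := Real.exp (-(y - y' - m)^2/(4*a)) with hYdef
  have h2πa : (0:ℝ) < 2*Real.pi*a := mul_pos (by positivity) ha0
  have hSpos : 0 < S := inv_pos.mpr (Real.sqrt_pos.mpr h2πa)
  have hXpos : 0 < X := Real.exp_pos _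
  have hYpos : 0 < Y := Real.exp_pos _
  have hEpos : 0 < E := Real.exp_pos _
  -- comparisons with τ, Λ
  have hS_le : S ≤ sΛ * sτ⁻¹ := by
    have h1 : Λ⁻¹ * τ ≤ 2*Real.pi*a := le_trans ha1 (by nlinarith [Real.pi_gt_three, ha0])
    have h3 : Real.sqrt (Λ⁻¹*τ) = sΛ⁻¹ * sτ := by
      rw [hsΛdef, hsτdef, Real.sqrt_mul (inv_nonneg.mpr hΛ0.le), Real.sqrt_inv]
    have h4 : 0 < sΛ⁻¹ * sτ := mul_pos (inv_pos.mpr hsΛ0) hsτ0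
    calc S ≤ (Real.sqrt (Λ⁻¹*τ))⁻¹ := by
          rw [hSdef]
          exact inv_anti₀ (by rw [h3]; exact h4) (Real.sqrt_le_sqrt h1)
      _ = sΛ * sτ⁻¹ := by rw [h3, mul_inv, inv_inv]
  have hsa_le : sa ≤ sΛ * sτ := by
    rw [hsadef, hsΛdef, hsτdef, ← Real.sqrt_mul hΛ0.le]
    exact Real.sqrt_le_sqrt ha2
  have hainv : a⁻¹ ≤ Λ * τ⁻¹ := by
    calc a⁻¹ ≤ (Λ⁻¹*τ)⁻¹ := inv_anti₀ (by positivity) ha1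
      _ = Λ * τ⁻¹ := by rw [mul_inv, inv_inv]
  have hYE : Y ≤ Real.exp (Cb^2) * E := by
    rw [hYdef, hEdef, ← Real.exp_add]
    apply Real.exp_le_exp.mpr
    have e1 : (y - y' - m)^2/(4*(Λ*τ)) ≤ (y - y' - m)^2/(4*a) := by
      gcongr
    have e2 : (y-y')^2 ≤ 2*(y-y'-m)^2 + 2*m^2 := by nlinarith [sq_nonneg (y - y' - 2*m)]
    have e3 : m^2 ≤ Cb^2*τ^2 := by nlinarith [abs_nonneg m, sq_abs m, hm]
    have e4 : (8*Λ)⁻¹ * (y-y')^2 / τ ≤ (y-y'-m)^2/(4*(Λ*τ)) + Cb^2 := by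
      rw [show (8*Λ)⁻¹ * (y-y')^2/τ = (y-y')^2/(8*Λ*τ) by field_simp]
      rw [show (y-y'-m)^2/(4*(Λ*τ)) + Cb^2 = (2*(y-y'-m)^2 + 8*Λ*τ*Cb^2)/(8*Λ*τ) by
        field_simp; ring]
      apply div_le_div_of_nonneg_right ?_ (by positivity)
      nlinarith [e2, e3, mul_nonneg (mul_nonneg (sq_nonneg Cb) hτ0.le)
        (show (0:ℝ) ≤ 4*Λ - τ by nlinarith)]
    rw [show -(y-y'-m)^2/(4*a) = -((y-y'-m)^2/(4*a)) by ring,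
      show -(8*Λ)⁻¹ * (y-y')^2/τ = -((8*Λ)⁻¹ * (y-y')^2/τ) by ring]
    linarith [e1, e4]
  -- core bounds
  have hc0 : X ≤ 64 * Y := by
    have := core a (y-y'-m) ha0 0 (by norm_num)
    simpa [hXdef, hYdef] using this
  have hc1 : |y-y'-m| * X ≤ 64 * sa * Y := by
    have := core a (y-y'-m) ha0 1 (by norm_num)
    simpa [hXdef, hYdef, hsadef] using this
  have hc2 : (y-y'-m)^2 * X ≤ 64 * a * Y := by
    have := core a (y-y'-m) ha0 2 (by norm_num)
    rwa [sq_abs, ← hsadef, hsa2] at this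
  have hc3 : |y-y'-m|^3 * X ≤ 64 * (sa*a) * Y := by
    have := core a (y-y'-m) ha0 3 (by norm_num)
    rwa [← hsadef, show sa^3 = sa * a by rw [← hsa2]; ring] at this
  have hc4 : (y-y'-m)^4 * X ≤ 64 * a^2 * Y := by
    have := core a (y-y'-m) ha0 4 (by norm_num)
    rwa [← hsadef, show |y-y'-m|^4 = ((y-y'-m)^2)^2 by rw [show (4:ℕ)=2*2 from rfl, pow_mul, sq_abs],
      show sa^4 = a^2 by rw [show (4:ℕ)=2*2 from rfl, pow_mul, hsa2],
      show ((y-y'-m)^2)^2 = (y-y'-m)^4 by ring] at this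

  have hrpow1 : τ ^ (-(1:ℝ)/2) = sτ⁻¹ := by
    rw [show (-(1:ℝ)/2) = -(1/2 : ℝ) by norm_num, Real.rpow_neg hτ0.le, ← Real.sqrt_eq_rpow,
      hsτdef]
  have hrpow32 : τ ^ (-(3:ℝ)/2) = (τ*sτ)⁻¹ := by
    rw [show (-(3:ℝ)/2) = -(3/2 : ℝ) by norm_num, Real.rpow_neg hτ0.le,
      show (3/2:ℝ) = 1 + 1/2 by norm_num, Real.rpow_add hτ0, Real.rpow_one, ← Real.sqrt_eq_rpow,
      hsτdef]
  have hrpow2 : τ ^ (-(2:ℝ)) = (τ^2)⁻¹ := by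
    rw [show (-(2:ℝ)) = -((2:ℕ):ℝ) by norm_num, Real.rpow_neg hτ0.le, Real.rpow_natCast]
  have hSXnn : (0:ℝ) ≤ S * X := (mul_pos hSpos hXpos).le
  have hnn1 : (0:ℝ) ≤ sΛ*sτ⁻¹ := mul_nonneg hsΛ0.le (inv_nonneg.mpr hsτ0.le)
  have hnn2 : (0:ℝ) ≤ (sΛ*sτ⁻¹)*(Real.exp (Cb^2)*E) :=
    mul_nonneg hnn1 (mul_nonneg (Real.exp_pos _).le hEpos.le)
  have h1 : S*Y ≤ (sΛ*sτ⁻¹)*(Real.exp (Cb^2)*E) :=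
    mul_le_mul hS_le hYE hYpos.le hnn1
  have hainn : (0:ℝ) ≤ a⁻¹ := inv_nonneg.mpr ha0.le
  have hΛτnn : (0:ℝ) ≤ Λ*τ⁻¹ := mul_nonneg hΛ0.le (inv_nonneg.mpr hτ0.le)
  have h2 : a⁻¹*a⁻¹ ≤ (Λ*τ⁻¹)*(Λ*τ⁻¹) := mul_le_mul hainv hainv hainn hΛτnn
  refine ⟨?_, ?_, ?_, ?_⟩
  · -- case 1 : ∂_m ∂_{y'}
    rw [deriv1 m a y' y ha0.ne', gauss_eq m a y' y ha0, ← hSdef, ← hXdef, hrpow1]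
    have habs1 : |S * X * ((y-y'-m)^2/a^2 - 1/a)| ≤ S * X * (((y-y'-m)^2 + a) / a^2) := by
      rw [abs_mul, abs_of_nonneg hSXnn,
        show (y-y'-m)^2/a^2 - 1/a = ((y-y'-m)^2 - a)/a^2 by field_simp,
        abs_div, abs_of_pos (pow_pos ha0 2)]
      apply mul_le_mul_of_nonneg_left ?_ hSXnn
      apply (div_le_div_iff_of_pos_right (pow_pos ha0 2)).mpr
      apply abs_le.mpr
      constructor <;> linarith [sq_nonneg (y-y'-m), ha0.le]
    calc |S * X * ((y-y'-m)^2/a^2 - 1/a)|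
        ≤ S * X * (((y-y'-m)^2 + a)/a^2) := habs1
      _ = ((y-y'-m)^2*X + a*X) * (S * (a^2)⁻¹) := by ring
      _ ≤ (64*a*Y + a*(64*Y)) * (S * (a^2)⁻¹) := by
          apply mul_le_mul_of_nonneg_right
            (add_le_add hc2 (mul_le_mul_of_nonneg_left hc0 ha0.le))
            (mul_nonneg hSpos.le (inv_nonneg.mpr (pow_nonneg ha0.le 2)))
      _ = 128 * (S*Y*a⁻¹) := by field_simp [ha0.ne']; ring
      _ ≤ 128 * ((sΛ*sτ⁻¹)*(Real.exp (Cb^2)*E)*(Λ*τ⁻¹)) := by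
          exact mul_le_mul_of_nonneg_left (mul_le_mul h1 hainv hainn hnn2) (by norm_num)
      _ = (128*(sΛ*Λ)*Real.exp (Cb^2)) * (sτ⁻¹*τ⁻¹*E) := by ring
      _ ≤ (512*Λ^3*Real.exp (Cb^2)) * (sτ⁻¹*τ⁻¹*E) := by
          apply mul_le_mul_of_nonneg_right ?_
            (mul_nonneg (mul_nonneg (inv_nonneg.mpr hsτ0.le) (inv_nonneg.mpr hτ0.le)) hEpos.le)
          have hco : 128*(sΛ*Λ) ≤ 512*Λ^3 := coefA Λ sΛ hΛ hsΛ0.le hsΛleΛ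
          exact mul_le_mul_of_nonneg_right hco (Real.exp_pos _).le
      _ = 4096*Λ^4*Real.exp (Cb^2) * τ⁻¹ * ((8*Λ)⁻¹ * sτ⁻¹ * E) := by
          field_simp [hΛ0.ne']; ring
  · -- case 2 : ∂_a ∂_{y'}
    rw [deriv2 m a y' y ha0, gauss_eq m a y' y ha0, ← hSdef, ← hXdef, hrpow32, hrpow1]
    have habs2 : |S*X*((y-y'-m)^3/(2*a^3) - 3*(y-y'-m)/(2*a^2))|
        ≤ S*X*((|y-y'-m|^3 + 3*(|y-y'-m| * a))/(2*a^3)) := by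
      rw [abs_mul, abs_of_nonneg hSXnn,
        show (y-y'-m)^3/(2*a^3) - 3*(y-y'-m)/(2*a^2)
          = ((y-y'-m)^3 - 3*((y-y'-m)*a))/(2*a^3) by field_simp,
        abs_div, abs_of_pos (mul_pos two_pos (pow_pos ha0 3))]
      apply mul_le_mul_of_nonneg_left ?_ hSXnn
      apply (div_le_div_iff_of_pos_right (mul_pos two_pos (pow_pos ha0 3))).mpr
      calc |(y-y'-m)^3 - 3*((y-y'-m)*a)|
          ≤ |(y-y'-m)^3| + |3*((y-y'-m)*a)| := abs_sub _ _
        _ = |y-y'-m|^3 + 3*(|y-y'-m| * a) := by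
            rw [abs_pow, abs_mul, abs_mul, abs_of_pos ha0,
              abs_of_nonneg (by norm_num : (0:ℝ) ≤ 3)]
    calc |S*X*((y-y'-m)^3/(2*a^3) - 3*(y-y'-m)/(2*a^2))|
        ≤ S*X*((|y-y'-m|^3 + 3*(|y-y'-m| * a))/(2*a^3)) := habs2
      _ = (|y-y'-m|^3*X + 3*a*(|y-y'-m| * X)) * (S * (2*a^3)⁻¹) := by ring
      _ ≤ (64*(sa*a)*Y + 3*a*(64*sa*Y)) * (S * (2*a^3)⁻¹) := by
          apply mul_le_mul_of_nonneg_right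
            (add_le_add hc3 (mul_le_mul_of_nonneg_left hc1 (mul_nonneg (by norm_num) ha0.le : (0:ℝ) ≤ 3*a)))
            (mul_nonneg hSpos.le (inv_nonneg.mpr
              (mul_pos two_pos (pow_pos ha0 3)).le))
      _ = 128 * (S*Y*(sa*(a⁻¹*a⁻¹))) := by field_simp [ha0.ne']; ring
      _ ≤ 128 * ((sΛ*sτ⁻¹)*(Real.exp (Cb^2)*E)*((sΛ*sτ)*((Λ*τ⁻¹)*(Λ*τ⁻¹)))) := by
          have h3 : sa*(a⁻¹*a⁻¹) ≤ (sΛ*sτ)*((Λ*τ⁻¹)*(Λ*τ⁻¹)) :=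
            mul_le_mul hsa_le h2 (mul_nonneg hainn hainn) (mul_nonneg hsΛ0.le hsτ0.le)
          have h4 := mul_le_mul h1 h3
            (mul_nonneg hsa0.le (mul_nonneg hainn hainn)) hnn2
          exact mul_le_mul_of_nonneg_left h4 (by norm_num)
      _ = (128*((sΛ*sΛ)*(Λ*Λ))*Real.exp (Cb^2)) * ((sτ⁻¹*sτ) * (τ⁻¹*τ⁻¹) * E) := by ring
      _ = (128*(Λ*(Λ*Λ))*Real.exp (Cb^2)) * (τ⁻¹*τ⁻¹*E) := by
          rw [hslmul, inv_mul_cancel₀ hsτ0.ne']; ring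
      _ ≤ (512*Λ^3*Real.exp (Cb^2)) * (τ⁻¹*τ⁻¹*E) := by
          apply mul_le_mul_of_nonneg_right ?_
            (mul_nonneg (mul_nonneg (inv_nonneg.mpr hτ0.le) (inv_nonneg.mpr hτ0.le)) hEpos.le)
          have hco : 128*(Λ*(Λ*Λ)) ≤ 512*Λ^3 := coefB Λ hΛ
          exact mul_le_mul_of_nonneg_right hco (Real.exp_pos _).le
      _ = 4096*Λ^4*Real.exp (Cb^2) * (τ*sτ)⁻¹ * ((8*Λ)⁻¹ * sτ⁻¹ * E) := by
          rw [← hss]; field_simp [hsτ0.ne', hΛ0.ne']; ring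
  · -- case 3 : ∂_m ∂²_{y'}
    rw [deriv3 m a y' y ha0.ne', gauss_eq m a y' y ha0, ← hSdef, ← hXdef, hrpow32, hrpow1]
    have habs3 : |S*X*((y-y'-m)^3/a^3 - 3*(y-y'-m)/a^2)|
        ≤ S*X*((|y-y'-m|^3 + 3*(|y-y'-m| * a))/a^3) := by
      rw [abs_mul, abs_of_nonneg hSXnn,
        show (y-y'-m)^3/a^3 - 3*(y-y'-m)/a^2
          = ((y-y'-m)^3 - 3*((y-y'-m)*a))/a^3 by field_simp,
        abs_div, abs_of_pos (pow_pos ha0 3)]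
      apply mul_le_mul_of_nonneg_left ?_ hSXnn
      apply (div_le_div_iff_of_pos_right (pow_pos ha0 3)).mpr
      calc |(y-y'-m)^3 - 3*((y-y'-m)*a)|
          ≤ |(y-y'-m)^3| + |3*((y-y'-m)*a)| := abs_sub _ _
        _ = |y-y'-m|^3 + 3*(|y-y'-m| * a) := by
            rw [abs_pow, abs_mul, abs_mul, abs_of_pos ha0,
              abs_of_nonneg (by norm_num : (0:ℝ) ≤ 3)]
    calc |S*X*((y-y'-m)^3/a^3 - 3*(y-y'-m)/a^2)|
        ≤ S*X*((|y-y'-m|^3 + 3*(|y-y'-m| * a))/a^3) := habs3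
      _ = (|y-y'-m|^3*X + 3*a*(|y-y'-m| * X)) * (S * (a^3)⁻¹) := by ring
      _ ≤ (64*(sa*a)*Y + 3*a*(64*sa*Y)) * (S * (a^3)⁻¹) := by
          apply mul_le_mul_of_nonneg_right
            (add_le_add hc3 (mul_le_mul_of_nonneg_left hc1 (mul_nonneg (by norm_num) ha0.le : (0:ℝ) ≤ 3*a)))
            (mul_nonneg hSpos.le (inv_nonneg.mpr (pow_nonneg ha0.le 3)))
      _ = 256 * (S*Y*(sa*(a⁻¹*a⁻¹))) := by field_simp [ha0.ne']; ring
      _ ≤ 256 * ((sΛ*sτ⁻¹)*(Real.exp (Cb^2)*E)*((sΛ*sτ)*((Λ*τ⁻¹)*(Λ*τ⁻¹)))) := by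
          have h3 : sa*(a⁻¹*a⁻¹) ≤ (sΛ*sτ)*((Λ*τ⁻¹)*(Λ*τ⁻¹)) :=
            mul_le_mul hsa_le h2 (mul_nonneg hainn hainn) (mul_nonneg hsΛ0.le hsτ0.le)
          have h4 := mul_le_mul h1 h3
            (mul_nonneg hsa0.le (mul_nonneg hainn hainn)) hnn2
          exact mul_le_mul_of_nonneg_left h4 (by norm_num)
      _ = (256*((sΛ*sΛ)*(Λ*Λ))*Real.exp (Cb^2)) * ((sτ⁻¹*sτ) * (τ⁻¹*τ⁻¹) * E) := by ring
      _ = (256*(Λ*(Λ*Λ))*Real.exp (Cb^2)) * (τ⁻¹*τ⁻¹*E) := by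
          rw [hslmul, inv_mul_cancel₀ hsτ0.ne']; ring
      _ ≤ (512*Λ^3*Real.exp (Cb^2)) * (τ⁻¹*τ⁻¹*E) := by
          apply mul_le_mul_of_nonneg_right ?_
            (mul_nonneg (mul_nonneg (inv_nonneg.mpr hτ0.le) (inv_nonneg.mpr hτ0.le)) hEpos.le)
          have hco : 256*(Λ*(Λ*Λ)) ≤ 512*Λ^3 := coefB' Λ hΛ
          exact mul_le_mul_of_nonneg_right hco (Real.exp_pos _).le
      _ = 4096*Λ^4*Real.exp (Cb^2) * (τ*sτ)⁻¹ * ((8*Λ)⁻¹ * sτ⁻¹ * E) := by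
          rw [← hss]; field_simp [hsτ0.ne', hΛ0.ne']; ring
  · -- case 4 : ∂_a ∂²_{y'}
    rw [deriv4 m a y' y ha0, gauss_eq m a y' y ha0, ← hSdef, ← hXdef, hrpow2, hrpow1]
    have habs4 : |S*X*((y-y'-m)^4/(2*a^4) - 3*(y-y'-m)^2/a^3 + 3/(2*a^2))|
        ≤ S*X*(((y-y'-m)^4 + 6*((y-y'-m)^2*a) + 3*a^2)/(2*a^4)) := by
      rw [abs_mul, abs_of_nonneg hSXnn,
        show (y-y'-m)^4/(2*a^4) - 3*(y-y'-m)^2/a^3 + 3/(2*a^2)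
          = ((y-y'-m)^4 - 6*((y-y'-m)^2*a) + 3*a^2)/(2*a^4) by field_simp; ring,
        abs_div, abs_of_pos (mul_pos two_pos (pow_pos ha0 4))]
      apply mul_le_mul_of_nonneg_left ?_ hSXnn
      apply (div_le_div_iff_of_pos_right (mul_pos two_pos (pow_pos ha0 4))).mpr
      apply abs_le.mpr
      constructor <;>
        linarith [mul_nonneg (sq_nonneg (y-y'-m)) ha0.le,
          sq_nonneg ((y-y'-m)^2), sq_nonneg a]
    calc |S*X*((y-y'-m)^4/(2*a^4) - 3*(y-y'-m)^2/a^3 + 3/(2*a^2))|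
        ≤ S*X*(((y-y'-m)^4 + 6*((y-y'-m)^2*a) + 3*a^2)/(2*a^4)) := habs4
      _ = ((y-y'-m)^4*X + 6*a*((y-y'-m)^2*X) + 3*a^2*X) * (S * (2*a^4)⁻¹) := by ring
      _ ≤ (64*a^2*Y + 6*a*(64*a*Y) + 3*a^2*(64*Y)) * (S * (2*a^4)⁻¹) := by
          apply mul_le_mul_of_nonneg_right
            (add_le_add (add_le_add hc4
              (mul_le_mul_of_nonneg_left hc2 (mul_nonneg (by norm_num) ha0.le : (0:ℝ) ≤ 6*a)))
              (mul_le_mul_of_nonneg_left hc0 (mul_nonneg (by norm_num) (sq_nonneg a) : (0:ℝ) ≤ 3*a^2)))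
            (mul_nonneg hSpos.le (inv_nonneg.mpr
              (mul_pos two_pos (pow_pos ha0 4)).le))
      _ = 320 * (S*Y*(a⁻¹*a⁻¹)) := by field_simp [ha0.ne']; ring
      _ ≤ 320 * ((sΛ*sτ⁻¹)*(Real.exp (Cb^2)*E)*((Λ*τ⁻¹)*(Λ*τ⁻¹))) := by
          have h4 := mul_le_mul h1 h2 (mul_nonneg hainn hainn) hnn2
          exact mul_le_mul_of_nonneg_left h4 (by norm_num)
      _ = (320*(sΛ*(Λ*Λ))*Real.exp (Cb^2)) * (sτ⁻¹*(τ⁻¹*τ⁻¹)*E) := by ring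
      _ ≤ (512*Λ^3*Real.exp (Cb^2)) * (sτ⁻¹*(τ⁻¹*τ⁻¹)*E) := by
          apply mul_le_mul_of_nonneg_right ?_
            (mul_nonneg (mul_nonneg (inv_nonneg.mpr hsτ0.le)
              (mul_nonneg (inv_nonneg.mpr hτ0.le) (inv_nonneg.mpr hτ0.le))) hEpos.le)
          have hco : 320*(sΛ*(Λ*Λ)) ≤ 512*Λ^3 := coefC Λ sΛ hΛ hsΛ0.le hsΛleΛ
          exact mul_le_mul_of_nonneg_right hco (Real.exp_pos _).le
      _ = 4096*Λ^4*Real.exp (Cb^2) * (τ^2)⁻¹ * ((8*Λ)⁻¹ * sτ⁻¹ * E) := by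
          rw [← hss]; field_simp [hsτ0.ne', hΛ0.ne']; ring
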